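/- arXiv:2006.14777 — 2 statements merged into one kernel-verified Lean document; each statement's English description precedes it below -/
import Mathlib

section
/- With the setup of the graded algebra A = ⊕_{φ ∈ 𝔊} A_φ arising from an action of a finite abelian group 𝒢, let K be the kernel of the 𝒢-action on A, K^⊥ = {φ ∈ 𝔊 : φ(h)=1 for all h ∈ K}, and let x act on A with g∗(x∗a) = χ(g)(x∗(g∗a)) for all g, a. If χ ∉ K^⊥, then x∗a = 0 for all a ∈ A. -/
/-- With `A` graded by characters of `G` (homogeneous elements span),
if `χ` is not in the orthogonal of the kernel `K` of the action, then the
skew-primitive `x` acts as zero. -/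
theorem stmt6 {F A : Type*} [Field F] [AddCommGroup A] [Module F A]
    {G : Type*} [CommGroup G] [Fintype G]
    (act : G → A →ₗ[F] A) (xact : A →ₗ[F] A)
    (χ : G →* Fˣ)
    (hgrading : ∀ a : A, a ∈ Submodule.span F
      {b : A | ∃ γ : G →* Fˣ, ∀ g : G, act g b = (γ g : F) • b})
    (hrel : ∀ (g : G) (a : A), act g (xact a) = (χ g : F) • xact (act g a))
    (hχ : ∃ h : G, (∀ a : A, act h a = a) ∧ (χ h : F) ≠ 1) :
    ∀ a : A, xact a = 0 := by
  obtain ⟨h, hfix, hne⟩ := hχ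
  intro a
  have key : xact a = (χ h : F) • xact a := by
    conv_lhs => rw [← hfix (xact a), hrel, hfix]
  have : ((χ h : F) - 1) • xact a = 0 := by
    rw [sub_smul, one_smul, ← key, sub_self]
  rcases smul_eq_zero.mp this with h1 | h2
  · exact absurd (sub_eq_zero.mp h1) hne
  · exact h2
end

section
/- Let n ≥ 3 be odd, ω ∈ F a primitive n-th root of unity, λ ∈ F with λ^n = 1, and set u(a) = λ·diag(1, ω²), u(x) = [[0,0],[p,0]], u(y) = [[0,q],[0,0]] in M_2(F). Then u(x)u(y) − u(y)u(x) = u(a) − τ·u(a)^{-1} holds if and only if τ = λ²(1+ω²)/(1+ω^{n−2}) and pq = λ(ω² − ω^{n−2})/(1 + ω^{n−2}), provided 1 + ω^{n−2} ≠ 0. -/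
private lemma scalar_key {F : Type*} [Field F] (lam w ω2 pq τ : F)
    (hlam : lam ≠ 0) (hden : 1 + w ≠ 0) :
    (-pq = lam - τ * lam⁻¹ ∧ pq = lam * ω2 - τ * (lam⁻¹ * w)) ↔
      (τ = lam ^ 2 * (1 + ω2) / (1 + w) ∧ pq = lam * (ω2 - w) / (1 + w)) := by
  constructor
  · rintro ⟨h1, h2⟩
    have e1 : -pq * lam = lam * lam - τ := by
      field_simp at h1; linear_combination h1
    have e2 : pq * lam = lam * lam * ω2 - τ * w := by
      field_simp at h2; linear_combination h2
    have hτ : τ = lam ^ 2 * (1 + ω2) / (1 + w) := by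
      rw [eq_div_iff hden]; linear_combination e1 + e2
    refine ⟨hτ, ?_⟩
    rw [hτ] at e2
    have e2' : pq * lam * (1 + w) = lam * lam * ω2 * (1 + w) - lam ^ 2 * (1 + ω2) * w := by
      field_simp at e2; linear_combination lam * e2
    rw [eq_div_iff hden]
    exact mul_left_cancel₀ hlam (by linear_combination e2')
  · rintro ⟨hτ, hpq⟩
    subst hτ hpq
    constructor <;> field_simp <;> ring

/-- With `u(a) = λ·diag(1, ω²)`, `u(x) = [[0,0],[p,0]]`,
`u(y) = [[0,q],[0,0]]`, the relation `u(x)u(y) − u(y)u(x) = u(a) − τ·u(a)⁻¹`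
holds iff `τ = λ²(1+ω²)/(1+ω^{n−2})` and `pq = λ(ω² − ω^{n−2})/(1+ω^{n−2})`. -/
theorem stmt16 {F : Type*} [Field F] (n : ℕ) (hn3 : 3 ≤ n) (hodd : Odd n)
    (ω : F) (hω : IsPrimitiveRoot ω n)
    (lam : F) (hlam : lam ^ n = 1)
    (hden : 1 + ω ^ (n - 2) ≠ 0)
    (p q τ : F)
    (ua ux uy : Matrix (Fin 2) (Fin 2) F)
    (hua : ua = lam • !![(1 : F), 0; 0, ω ^ 2])
    (hux : ux = !![(0 : F), 0; p, 0])
    (huy : uy = !![(0 : F), q; 0, 0]) :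
    (ux * uy - uy * ux = ua - τ • ua⁻¹) ↔
      (τ = lam ^ 2 * (1 + ω ^ 2) / (1 + ω ^ (n - 2)) ∧
       p * q = lam * (ω ^ 2 - ω ^ (n - 2)) / (1 + ω ^ (n - 2))) := by
  have hlamne : lam ≠ 0 := by
    intro h; rw [h] at hlam; simp [zero_pow (by omega : n ≠ 0)] at hlam
  have hw : ω ^ 2 * ω ^ (n - 2) = 1 := by
    rw [← pow_add, show 2 + (n - 2) = n by omega, hω.pow_eq_one]
  have hinv : ua⁻¹ = lam⁻¹ • !![(1 : F), 0; 0, ω ^ (n - 2)] := by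
    apply Matrix.inv_eq_right_inv
    rw [hua, Matrix.smul_mul, Matrix.mul_smul, smul_smul,
      mul_inv_cancel₀ hlamne, one_smul, Matrix.mul_fin_two]
    norm_num [hw]
    exact Matrix.one_fin_two.symm
  subst hua hux huy
  rw [hinv, ← Matrix.ext_iff]
  norm_num [Fin.forall_fin_two, Matrix.mul_apply, Fin.sum_univ_two]
  rw [mul_comm q p]
  exact scalar_key lam (ω ^ (n - 2)) (ω ^ 2) (p * q) τ hlamne hden
end
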